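/- For every ε ∈ (0,1] and every integer m ≥ 1, the derivative of b_{m,ε} is O(1/x) as x → ∞: there exist constants C > 0 and x_0 ≥ 1 such that for all x ≥ x_0, b_{m,ε} is differentiable at x and |b_{m,ε}'(x)| ≤ C/x. -/

import Mathlib

/-- The iterated logarithm functions: `Phi 0 x = x`, `Phi (m+1) x = 1 + log (Phi m x)`,
so that `Phi 1 x = φ(x) = 1 + log x` and `Phi m = φ(Phi (m−1))`. -/
noncomputable def Phi : ℕ → ℝ → ℝ
  | 0, x => x
  | m + 1, x => 1 + Real.log (Phi m x)

/-- The boundary `b_{m,ε}(x) = −log [1/(ε Φ_m(x)^ε) − 1/(ε Φ_m(x+1)^ε)]`. -/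
noncomputable def bfun (m : ℕ) (ε : ℝ) (x : ℝ) : ℝ :=
  -Real.log (1 / (ε * Phi m x ^ ε) - 1 / (ε * Phi m (x + 1) ^ ε))

open Real Finset

noncomputable def Pp (m : ℕ) (x : ℝ) : ℝ := ∏ j ∈ Finset.range m, Phi j x

lemma one_le_phi (m : ℕ) {x : ℝ} (hx : 1 ≤ x) : 1 ≤ Phi m x := by
  induction m with
  | zero => exact hx
  | succ m ih =>
    have : 0 ≤ Real.log (Phi m x) := Real.log_nonneg ih
    show (1:ℝ) ≤ 1 + Real.log (Phi m x)
    linarith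

lemma phi_pos (m : ℕ) {x : ℝ} (hx : 1 ≤ x) : 0 < Phi m x :=
  lt_of_lt_of_le one_pos (one_le_phi m hx)

lemma phi_mono (m : ℕ) {x y : ℝ} (hx : 1 ≤ x) (hxy : x ≤ y) : Phi m x ≤ Phi m y := by
  induction m with
  | zero => exact hxy
  | succ m ih =>
    have := Real.log_le_log (phi_pos m hx) ih
    show 1 + Real.log (Phi m x) ≤ 1 + Real.log (Phi m y)
    linarith

lemma one_le_Pp (m : ℕ) {x : ℝ} (hx : 1 ≤ x) : 1 ≤ Pp m x := by
  induction m with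
  | zero => simp [Pp]
  | succ m ih =>
    have h := one_le_phi m hx
    have hs : Pp (m+1) x = Pp m x * Phi m x := Finset.prod_range_succ _ _
    nlinarith


lemma Pp_pos (m : ℕ) {x : ℝ} (hx : 1 ≤ x) : 0 < Pp m x :=
  lt_of_lt_of_le one_pos (one_le_Pp m hx)

lemma le_Pp (m : ℕ) (hm : 1 ≤ m) {x : ℝ} (hx : 1 ≤ x) : x ≤ Pp m x := by
  induction m with
  | zero => omega
  | succ m ih =>
    rcases Nat.eq_zero_or_pos m with h | h
    · subst h; simp [Pp, Phi]
    · have h1 := ih h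
      have h2 := one_le_phi m hx
      have h3 : Pp (m+1) x = Pp m x * Phi m x := Finset.prod_range_succ _ _
      nlinarith [Pp_pos m hx]

lemma Pp_mono (m : ℕ) {x y : ℝ} (hx : 1 ≤ x) (hxy : x ≤ y) : Pp m x ≤ Pp m y :=
  Finset.prod_le_prod (fun j _ => le_of_lt (phi_pos j hx))
    (fun j _ => phi_mono j hx hxy)

lemma phi_hasDerivAt (m : ℕ) {x : ℝ} (hx : 1 ≤ x) :
    HasDerivAt (Phi m) (Pp m x)⁻¹ x := by
  induction m with
  | zero => simpa [Pp, show Phi 0 = id from funext fun _ => rfl] using (hasDerivAt_id x)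
  | succ m ih =>
    have h1 : HasDerivAt (fun y => 1 + Real.log (Phi m y))
        ((Pp m x)⁻¹ / Phi m x) x :=
      (ih.log (ne_of_gt (phi_pos m hx))).const_add 1
    have h2 : (Pp m x)⁻¹ / Phi m x = (Pp (m+1) x)⁻¹ := by
      rw [show Pp (m+1) x = Pp m x * Phi m x from Finset.prod_range_succ _ _, mul_inv,
        div_eq_mul_inv]
    rw [h2] at h1
    exact h1.congr_deriv rfl

lemma phi_succ_le (m : ℕ) {x : ℝ} (hx : 1 ≤ x) : Phi m (x + 1) ≤ Phi m x + 1 := by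
  induction m with
  | zero => exact le_refl _
  | succ m ih =>
    have h1 : Phi m (x+1) ≤ 2 * Phi m x := by
      have := one_le_phi m hx; linarith
    have h2 : Real.log (Phi m (x+1)) ≤ Real.log 2 + Real.log (Phi m x) := by
      calc Real.log (Phi m (x+1)) ≤ Real.log (2 * Phi m x) :=
            Real.log_le_log (phi_pos m (by linarith)) h1
        _ = Real.log 2 + Real.log (Phi m x) :=
            Real.log_mul two_ne_zero (ne_of_gt (phi_pos m hx))
    have h3 : Real.log 2 ≤ 1 := by
      have := Real.log_le_sub_one_of_pos (two_pos (α := ℝ)); linarith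
    show 1 + Real.log (Phi m (x+1)) ≤ (1 + Real.log (Phi m x)) + 1
    linarith

lemma phi_succ_le' (m : ℕ) {x : ℝ} (hx : 1 ≤ x) : Phi m (x + 1) ≤ 2 * Phi m x := by
  have := phi_succ_le m hx; have := one_le_phi m hx; linarith

lemma Pp_succ_le (m : ℕ) {x : ℝ} (hx : 1 ≤ x) : Pp m (x + 1) ≤ 2 ^ m * Pp m x := by
  have : Pp m (x+1) ≤ ∏ j ∈ Finset.range m, (2 * Phi j x) :=
    Finset.prod_le_prod (fun j _ => le_of_lt (phi_pos j (by linarith)))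
      (fun j _ => phi_succ_le' j hx)
  calc Pp m (x+1) ≤ ∏ j ∈ Finset.range m, (2 * Phi j x) := this
    _ = 2 ^ m * Pp m x := by
        rw [Finset.prod_mul_distrib, Finset.prod_const, Finset.card_range]; rfl

lemma phi_diff_le (m : ℕ) {x : ℝ} (hx : 1 ≤ x) :
    Phi m (x + 1) - Phi m x ≤ (Pp m x)⁻¹ := by
  induction m with
  | zero => simp [Phi, Pp]
  | succ m ih =>
    have hpx := phi_pos m hx
    have hpx1 := phi_pos m (by linarith : (1:ℝ) ≤ x + 1)
    have hmono := phi_mono m hx (by linarith : x ≤ x + 1)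
    have key : Real.log (Phi m (x+1)) - Real.log (Phi m x)
        ≤ (Phi m (x+1) - Phi m x) / Phi m x := by
      rw [← Real.log_div (ne_of_gt hpx1) (ne_of_gt hpx)]
      have := Real.log_le_sub_one_of_pos (div_pos hpx1 hpx)
      have h' : Phi m (x+1) / Phi m x - 1 = (Phi m (x+1) - Phi m x) / Phi m x := by
        field_simp
      linarith [this, h'.symm ▸ this]
    have h2 : (Phi m (x+1) - Phi m x) / Phi m x ≤ (Pp m x)⁻¹ / Phi m x :=
      div_le_div_of_nonneg_right ih hpx.le |>.trans_eq rfl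
    have h3 : (Pp m x)⁻¹ / Phi m x = (Pp (m+1) x)⁻¹ := by
      rw [show Pp (m+1) x = Pp m x * Phi m x from Finset.prod_range_succ _ _, mul_inv,
        div_eq_mul_inv]
    show (1 + Real.log (Phi m (x+1))) - (1 + Real.log (Phi m x)) ≤ (Pp (m+1) x)⁻¹
    calc (1 + Real.log (Phi m (x+1))) - (1 + Real.log (Phi m x))
        = Real.log (Phi m (x+1)) - Real.log (Phi m x) := by ring
      _ ≤ (Phi m (x+1) - Phi m x) / Phi m x := key
      _ ≤ (Pp m x)⁻¹ / Phi m x := h2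
      _ = (Pp (m+1) x)⁻¹ := h3

lemma phi_diff_ge (m : ℕ) {x : ℝ} (hx : 1 ≤ x) :
    (Pp m (x + 1))⁻¹ ≤ Phi m (x + 1) - Phi m x := by
  induction m with
  | zero => simp [Phi, Pp]
  | succ m ih =>
    have hx1 : (1:ℝ) ≤ x + 1 := by linarith
    have hpx := phi_pos m hx
    have hpx1 := phi_pos m hx1
    have key : (Phi m (x+1) - Phi m x) / Phi m (x+1)
        ≤ Real.log (Phi m (x+1)) - Real.log (Phi m x) := by
      rw [← Real.log_div (ne_of_gt hpx1) (ne_of_gt hpx)]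
      have hd : 0 < Phi m x / Phi m (x+1) := div_pos hpx hpx1
      have h1 := Real.log_le_sub_one_of_pos hd
      have h2 : Real.log (Phi m (x+1) / Phi m x) = - Real.log (Phi m x / Phi m (x+1)) := by
        rw [← Real.log_inv]; congr 1; field_simp
      have h3 : Phi m x / Phi m (x+1) - 1 = -((Phi m (x+1) - Phi m x) / Phi m (x+1)) := by
        field_simp
        ring
      rw [h2]; rw [h3] at h1; linarith
    have h2 : (Pp m (x+1))⁻¹ / Phi m (x+1) ≤ (Phi m (x+1) - Phi m x) / Phi m (x+1) :=
      div_le_div_of_nonneg_right ih hpx1.le |>.trans_eq rfl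
    have h3 : (Pp m (x+1))⁻¹ / Phi m (x+1) = (Pp (m+1) (x+1))⁻¹ := by
      rw [show Pp (m+1) (x+1) = Pp m (x+1) * Phi m (x+1) from Finset.prod_range_succ _ _,
        mul_inv, div_eq_mul_inv]
    show (Pp (m+1) (x+1))⁻¹ ≤ (1 + Real.log (Phi m (x+1))) - (1 + Real.log (Phi m x))
    calc (Pp (m+1) (x+1))⁻¹ = (Pp m (x+1))⁻¹ / Phi m (x+1) := h3.symm
      _ ≤ (Phi m (x+1) - Phi m x) / Phi m (x+1) := h2
      _ ≤ Real.log (Phi m (x+1)) - Real.log (Phi m x) := key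
      _ = (1 + Real.log (Phi m (x+1))) - (1 + Real.log (Phi m x)) := by ring

lemma Pp_diff_le (m : ℕ) {x : ℝ} (hx : 1 ≤ x) :
    Pp m (x + 1) - Pp m x ≤ m * Pp m (x + 1) / x := by
  induction m with
  | zero => simp [Pp]
  | succ m ih =>
    have hx1 : (1:ℝ) ≤ x + 1 := by linarith
    have hx0 : (0:ℝ) < x := by linarith
    have hs : Pp (m+1) x = Pp m x * Phi m x := Finset.prod_range_succ _ _
    have hs1 : Pp (m+1) (x+1) = Pp m (x+1) * Phi m (x+1) := Finset.prod_range_succ _ _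
    have h1 : Phi m (x+1) - Phi m x ≤ (Pp m x)⁻¹ := phi_diff_le m hx
    have hPp := Pp_pos m hx
    have hPp1 := Pp_pos m hx1
    have hphi1 := phi_pos m hx1
    have hPmono := Pp_mono m hx (by linarith : x ≤ x + 1)
    have hphi := phi_pos m hx
    have hphimono := phi_mono m hx (by linarith : x ≤ x + 1)
    -- Pp (m+1)(x+1) - Pp(m+1)(x) = (Pp m (x+1) - Pp m x) * Phi m (x+1) + Pp m x * (Phi m (x+1) - Phi m x)
    have key : Pp (m+1) (x+1) - Pp (m+1) x
        = (Pp m (x+1) - Pp m x) * Phi m (x+1) + Pp m x * (Phi m (x+1) - Phi m x) := by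
      rw [hs, hs1]; ring
    have t1 : (Pp m (x+1) - Pp m x) * Phi m (x+1) ≤ m * Pp (m+1) (x+1) / x := by
      rw [hs1]
      calc (Pp m (x+1) - Pp m x) * Phi m (x+1) ≤ (m * Pp m (x+1) / x) * Phi m (x+1) :=
            mul_le_mul_of_nonneg_right ih (le_of_lt hphi1)
        _ = m * (Pp m (x+1) * Phi m (x+1)) / x := by ring
    have t2 : Pp m x * (Phi m (x+1) - Phi m x) ≤ Pp (m+1) (x+1) / x := by
      have : Pp m x * (Phi m (x+1) - Phi m x) ≤ Pp m x * (Pp m x)⁻¹ :=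
        mul_le_mul_of_nonneg_left h1 (le_of_lt hPp)
      rw [mul_inv_cancel₀ (ne_of_gt hPp)] at this
      have hge : x ≤ Pp (m+1) (x+1) := le_trans (by linarith) (le_Pp (m+1) (by omega) hx1)
      calc Pp m x * (Phi m (x+1) - Phi m x) ≤ 1 := this
        _ ≤ Pp (m+1) (x+1) / x := (one_le_div hx0).mpr hge
    calc Pp (m+1) (x+1) - Pp (m+1) x
        = (Pp m (x+1) - Pp m x) * Phi m (x+1) + Pp m x * (Phi m (x+1) - Phi m x) := key
      _ ≤ m * Pp (m+1) (x+1) / x + Pp (m+1) (x+1) / x := add_le_add t1 t2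
      _ = (m+1) * Pp (m+1) (x+1) / x := by ring
      _ = (↑(m+1)) * Pp (m+1) (x+1) / x := by push_cast; ring

noncomputable def hf (m : ℕ) (ε x : ℝ) : ℝ := (Phi m x ^ (ε + 1))⁻¹ * (Pp m x)⁻¹

section estimates

variable {m : ℕ} {ε x : ℝ}

lemma hf_pos (hε : 0 < ε) (hx : 1 ≤ x) : 0 < hf m ε x := by
  have h1 : (0:ℝ) < Phi m x ^ (ε + 1) := Real.rpow_pos_of_pos (phi_pos m hx) _
  exact mul_pos (inv_pos.mpr h1) (inv_pos.mpr (Pp_pos m hx))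

lemma hf_antitone (hε : 0 < ε) (hx : 1 ≤ x) : hf m ε (x + 1) ≤ hf m ε x := by
  have hx1 : (1:ℝ) ≤ x + 1 := by linarith
  have hA : Phi m x ^ (ε+1) ≤ Phi m (x+1) ^ (ε+1) :=
    Real.rpow_le_rpow (phi_pos m hx).le (phi_mono m hx (by linarith)) (by linarith)
  have hP : Pp m x ≤ Pp m (x+1) := Pp_mono m hx (by linarith)
  have h1 : (0:ℝ) < Phi m x ^ (ε + 1) := Real.rpow_pos_of_pos (phi_pos m hx) _
  have h2 := Pp_pos m hx
  exact mul_le_mul (inv_anti₀ h1 hA) (inv_anti₀ h2 hP)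
    (inv_nonneg.mpr (Pp_pos m hx1).le) (inv_nonneg.mpr h1.le)

lemma hf_ratio (hε0 : 0 < ε) (hε1 : ε ≤ 1) (hx : 1 ≤ x) :
    hf m ε x ≤ 2 ^ (m + 2) * hf m ε (x + 1) := by
  have hx1 : (1:ℝ) ≤ x + 1 := by linarith
  have hApos := phi_pos m hx
  have hApos1 := phi_pos m hx1
  have hw : (0:ℝ) ≤ ε + 1 := by linarith
  -- A' ≤ 2A  ⇒  A'^w ≤ (2A)^w = 2^w A^w ≤ 4 A^w
  have h1 : Phi m (x+1) ^ (ε+1) ≤ (2 * Phi m x) ^ (ε+1) :=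
    Real.rpow_le_rpow hApos1.le (phi_succ_le' m hx) hw
  have h2 : ((2:ℝ) * Phi m x) ^ (ε+1) = (2:ℝ) ^ (ε+1) * Phi m x ^ (ε+1) :=
    Real.mul_rpow (by norm_num) hApos.le
  have h3 : (2:ℝ) ^ (ε+1) ≤ 4 := by
    calc (2:ℝ) ^ (ε+1) ≤ (2:ℝ) ^ (2:ℝ) :=
          Real.rpow_le_rpow_of_exponent_le one_le_two (by linarith)
      _ = 4 := by
          rw [show (2:ℝ) = ((2:ℕ):ℝ) by norm_num, Real.rpow_natCast]; norm_num
  have hP : Pp m (x+1) ≤ 2 ^ m * Pp m x := Pp_succ_le m hx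
  have hAw : (0:ℝ) < Phi m x ^ (ε+1) := Real.rpow_pos_of_pos hApos _
  have hAw1 : (0:ℝ) < Phi m (x+1) ^ (ε+1) := Real.rpow_pos_of_pos hApos1 _
  have hPp := Pp_pos m hx
  have hPp1 := Pp_pos m hx1
  -- hf x = (A^w)⁻¹ P⁻¹ ;  hf (x+1) = (A'^w)⁻¹ P'⁻¹
  -- A'^w ≤ 4 A^w and P' ≤ 2^m P  ⇒  (A^w)⁻¹ P⁻¹ ≤ 4·2^m (A'^w)⁻¹ P'⁻¹
  show (Phi m x ^ (ε+1))⁻¹ * (Pp m x)⁻¹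
      ≤ 2 ^ (m+2) * ((Phi m (x+1) ^ (ε+1))⁻¹ * (Pp m (x+1))⁻¹)
  have key : Phi m (x+1) ^ (ε+1) * Pp m (x+1) ≤ 2^(m+2) * (Phi m x ^ (ε+1) * Pp m x) := by
    have : Phi m (x+1) ^ (ε+1) * Pp m (x+1) ≤ (4 * Phi m x ^ (ε+1)) * (2^m * Pp m x) :=
      mul_le_mul (by nlinarith) hP hPp1.le (by positivity)
    calc Phi m (x+1) ^ (ε+1) * Pp m (x+1) ≤ (4 * Phi m x ^ (ε+1)) * (2^m * Pp m x) := this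
      _ = (4 * 2^m) * (Phi m x ^ (ε+1) * Pp m x) := by ring
      _ = 2^(m+2) * (Phi m x ^ (ε+1) * Pp m x) := by rw [pow_add]; ring
  have ha : (0:ℝ) < Phi m x ^ (ε+1) * Pp m x := by positivity
  have hb : (0:ℝ) < Phi m (x+1) ^ (ε+1) * Pp m (x+1) := by positivity
  rw [← mul_inv, ← mul_inv, ← div_eq_mul_inv, le_div_iff₀ hb]
  rw [inv_mul_le_iff₀ ha]
  linarith [key]

end estimates

section estimates2

variable {m : ℕ} {ε x : ℝ}

lemma hf_diff_le (hε0 : 0 < ε) (hε1 : ε ≤ 1) (hm : 1 ≤ m) (hx : 1 ≤ x) :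
    hf m ε x - hf m ε (x + 1) ≤ (m + 2) * hf m ε x / x := by
  have hx1 : (1:ℝ) ≤ x + 1 := by linarith
  have hx0 : (0:ℝ) < x := by linarith
  set A := Phi m x with hA
  set A' := Phi m (x+1) with hA'
  set P := Pp m x with hP
  set P' := Pp m (x+1) with hP'
  have hApos : 0 < A := phi_pos m hx
  have hApos1 : 0 < A' := phi_pos m hx1
  have hAA : A ≤ A' := phi_mono m hx (by linarith)
  have hPpos : 0 < P := Pp_pos m hx
  have hPpos1 : 0 < P' := Pp_pos m hx1
  have hPP : P ≤ P' := Pp_mono m hx (by linarith)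
  have hxP : x ≤ P := le_Pp m hm hx
  have hA1 : 1 ≤ A := one_le_phi m hx
  have hA1' : 1 ≤ A' := one_le_phi m hx1
  set w : ℝ := ε + 1 with hwdef
  have hw1 : 1 ≤ w := by simp [hwdef]; linarith
  have hw2 : w ≤ 2 := by simp [hwdef]; linarith
  set aw := A ^ w with haw
  set aw' := A' ^ w with haw'
  have hawpos : 0 < aw := Real.rpow_pos_of_pos hApos _
  have hawpos' : 0 < aw' := Real.rpow_pos_of_pos hApos1 _
  have hawle : aw ≤ aw' := Real.rpow_le_rpow hApos.le hAA (by linarith)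
  -- Bernoulli:  (A/A')^w ≥ 1 + w (A/A' - 1)
  have hbern : 1 + w * (A / A' - 1) ≤ (A / A') ^ w := by
    have hs : (-1:ℝ) ≤ A / A' - 1 := by
      have : 0 < A / A' := div_pos hApos hApos1
      linarith
    have := one_add_mul_self_le_rpow_one_add hs hw1
    simpa using this
  have hdivrpow : (A / A') ^ w = aw / aw' := Real.div_rpow hApos.le hApos1.le w
  -- Term 1 : aw⁻¹ - aw'⁻¹ ≤ aw⁻¹ * w * (A' - A) / A'
  have hdAA : A' - A ≤ P⁻¹ := phi_diff_le m hx
  have t1 : aw⁻¹ - aw'⁻¹ ≤ aw⁻¹ * (w * ((A' - A) / A')) := by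
    have h1 : 1 - aw / aw' ≤ w * ((A' - A) / A') := by
      rw [hdivrpow] at hbern
      have : w * (A / A' - 1) = -(w * ((A' - A) / A')) := by field_simp; ring
      linarith [hbern, this ▸ hbern]
    have h2 : aw⁻¹ - aw'⁻¹ = aw⁻¹ * (1 - aw / aw') := by
      field_simp
    rw [h2]
    exact mul_le_mul_of_nonneg_left h1 (inv_nonneg.mpr hawpos.le)
  -- Term 2
  have hPdiff : P' - P ≤ m * P' / x := Pp_diff_le m hx
  -- assemble
  have split : hf m ε x - hf m ε (x+1)
      = (aw⁻¹ - aw'⁻¹) * P⁻¹ + aw'⁻¹ * (P⁻¹ - P'⁻¹) := by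
    show aw⁻¹ * P⁻¹ - aw'⁻¹ * P'⁻¹ = _
    ring
  have term1 : (aw⁻¹ - aw'⁻¹) * P⁻¹ ≤ 2 * (aw⁻¹ * P⁻¹) / x := by
    have hb1 : w * ((A' - A) / A') ≤ 2 / x := by
      have h3 : (A' - A) / A' ≤ A' - A := by
        rw [div_le_iff₀ hApos1]
        nlinarith [phi_diff_le m hx, inv_nonneg.mpr hPpos.le]
      have h4 : A' - A ≤ x⁻¹ := le_trans hdAA (inv_anti₀ hx0 hxP)
      have h5 : 0 ≤ A' - A := by linarith
      calc w * ((A' - A) / A') ≤ 2 * x⁻¹ := by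
            apply mul_le_mul hw2 (le_trans h3 h4) _ (by norm_num)
            positivity
        _ = 2 / x := by rw [div_eq_mul_inv]
    calc (aw⁻¹ - aw'⁻¹) * P⁻¹ ≤ (aw⁻¹ * (2 / x)) * P⁻¹ := by
          apply mul_le_mul_of_nonneg_right _ (inv_nonneg.mpr hPpos.le)
          exact le_trans t1 (mul_le_mul_of_nonneg_left hb1 (inv_nonneg.mpr hawpos.le))
      _ = 2 * (aw⁻¹ * P⁻¹) / x := by ring
  have term2 : aw'⁻¹ * (P⁻¹ - P'⁻¹) ≤ m * (aw⁻¹ * P⁻¹) / x := by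
    have h1 : P⁻¹ - P'⁻¹ = (P' - P) / (P * P') := by field_simp
    have h2 : P⁻¹ - P'⁻¹ ≤ m / (x * P) := by
      rw [h1, div_le_div_iff₀ (by positivity) (by positivity)]
      have h3 : (P' - P) * x ≤ m * P' := by
        have := hPdiff
        rw [le_div_iff₀ hx0] at this
        linarith
      have h4 := mul_le_mul_of_nonneg_right h3 hPpos.le
      calc (P' - P) * (x * P) = (P' - P) * x * P := by ring
        _ ≤ ↑m * P' * P := h4
        _ = ↑m * (P * P') := by ring
    have hnn : 0 ≤ P⁻¹ - P'⁻¹ := by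
      have := inv_anti₀ hPpos hPP; linarith
    calc aw'⁻¹ * (P⁻¹ - P'⁻¹) ≤ aw⁻¹ * (m / (x * P)) :=
          mul_le_mul (inv_anti₀ hawpos hawle) h2 hnn (inv_nonneg.mpr hawpos.le)
      _ = m * (aw⁻¹ * P⁻¹) / x := by
          simp only [div_eq_mul_inv, mul_inv]; ring
  calc hf m ε x - hf m ε (x+1)
      = (aw⁻¹ - aw'⁻¹) * P⁻¹ + aw'⁻¹ * (P⁻¹ - P'⁻¹) := split
    _ ≤ 2 * (aw⁻¹ * P⁻¹) / x + m * (aw⁻¹ * P⁻¹) / x := add_le_add term1 term2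
    _ = (m + 2) * (aw⁻¹ * P⁻¹) / x := by ring
    _ = (m + 2) * hf m ε x / x := rfl

end estimates2

section final

variable {m : ℕ} {ε x : ℝ}

lemma diff_lower (hε0 : 0 < ε) (hx : 1 ≤ x) :
    hf m ε (x + 1) ≤ ε⁻¹ * Phi m x ^ (-ε) - ε⁻¹ * Phi m (x + 1) ^ (-ε) := by
  have hx1 : (1:ℝ) ≤ x + 1 := by linarith
  have hApos := phi_pos m hx
  have hApos1 := phi_pos m hx1
  have hPpos1 := Pp_pos m hx1
  set lA := Real.log (Phi m x) with hlA
  set lA' := Real.log (Phi m (x+1)) with hlA'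
  have hlog : (Pp m (x+1) * Phi m (x+1))⁻¹ ≤ lA' - lA := by
    have h := phi_diff_ge (m+1) hx
    have e1 : Phi (m+1) (x+1) - Phi (m+1) x = lA' - lA := by
      show (1 + lA') - (1 + lA) = lA' - lA; ring
    have e2 : Pp (m+1) (x+1) = Pp m (x+1) * Phi m (x+1) := Finset.prod_range_succ _ _
    rw [e2, e1] at h
    exact h
  have key : Phi m (x+1) ^ (-ε) * (ε * (lA' - lA))
      ≤ Phi m x ^ (-ε) - Phi m (x+1) ^ (-ε) := by
    rw [Real.rpow_def_of_pos hApos, Real.rpow_def_of_pos hApos1]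
    have h1 : Real.exp (lA * -ε) = Real.exp (lA' * -ε) * Real.exp (ε * (lA' - lA)) := by
      rw [← Real.exp_add]; ring_nf
    rw [h1]
    have h2 := Real.add_one_le_exp (ε * (lA' - lA))
    nlinarith [Real.exp_pos (lA' * -ε), h2,
      mul_le_mul_of_nonneg_left h2 (Real.exp_pos (lA' * -ε)).le]
  have hE : (0:ℝ) ≤ Phi m (x+1) ^ (-ε) := (Real.rpow_pos_of_pos hApos1 _).le
  have step1 : Phi m (x+1) ^ (-ε) * (lA' - lA)
      ≤ ε⁻¹ * Phi m x ^ (-ε) - ε⁻¹ * Phi m (x + 1) ^ (-ε) := by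
    have h3 := mul_le_mul_of_nonneg_left key (inv_nonneg.mpr hε0.le)
    calc Phi m (x+1) ^ (-ε) * (lA' - lA)
        = ε⁻¹ * (Phi m (x+1) ^ (-ε) * (ε * (lA' - lA))) := by
          field_simp
      _ ≤ ε⁻¹ * (Phi m x ^ (-ε) - Phi m (x+1) ^ (-ε)) := h3
      _ = ε⁻¹ * Phi m x ^ (-ε) - ε⁻¹ * Phi m (x + 1) ^ (-ε) := by ring
  have step2 : hf m ε (x+1) ≤ Phi m (x+1) ^ (-ε) * (lA' - lA) := by
    have heq : hf m ε (x+1) = Phi m (x+1) ^ (-ε) * (Pp m (x+1) * Phi m (x+1))⁻¹ := by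
      show (Phi m (x+1) ^ (ε+1))⁻¹ * (Pp m (x+1))⁻¹ = _
      rw [Real.rpow_add_one (ne_of_gt hApos1) ε, Real.rpow_neg hApos1.le, mul_inv, mul_inv]
      ring
    rw [heq]
    exact mul_le_mul_of_nonneg_left hlog hE
  linarith

lemma F_hasDerivAt (hε0 : 0 < ε) (hx : 1 ≤ x) :
    HasDerivAt (fun y => ε⁻¹ * Phi m y ^ (-ε)) (-(hf m ε x)) x := by
  have hApos := phi_pos m hx
  have h1 : HasDerivAt (fun y => Phi m y ^ (-ε))
      ((Pp m x)⁻¹ * (-ε) * Phi m x ^ (-ε - 1)) x :=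
    (phi_hasDerivAt m hx).rpow_const (Or.inl (ne_of_gt hApos))
  have h2 := h1.const_mul ε⁻¹
  have e : Phi m x ^ (-ε - 1) = (Phi m x ^ (ε+1))⁻¹ := by
    rw [show -ε - 1 = -(ε+1) by ring, Real.rpow_neg hApos.le]
  have e2 : ε⁻¹ * ((Pp m x)⁻¹ * (-ε) * Phi m x ^ (-ε - 1)) = -(hf m ε x) := by
    rw [e]
    show _ = -((Phi m x ^ (ε+1))⁻¹ * (Pp m x)⁻¹)
    field_simp
  rw [e2] at h2
  exact h2

end final

/-- The derivative of `b_{m,ε}` is `O(1/x)` as `x → ∞`: there are `C > 0`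
and `x₀ ≥ 1` such that for all `x ≥ x₀`, `b_{m,ε}` is differentiable at `x` and
`|b_{m,ε}'(x)| ≤ C / x`. -/
theorem statement14 (ε : ℝ) (hε0 : 0 < ε) (hε1 : ε ≤ 1) (m : ℕ) (hm : 1 ≤ m) :
    ∃ C > (0 : ℝ), ∃ x₀ : ℝ, 1 ≤ x₀ ∧ ∀ x ≥ x₀,
      DifferentiableAt ℝ (bfun m ε) x ∧ |deriv (bfun m ε) x| ≤ C / x := by
  refine ⟨((m:ℝ) + 2) * 2 ^ (m + 2), by positivity, 2, by norm_num, ?_⟩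
  intro x hx2
  have hx : (1:ℝ) ≤ x := by linarith
  have hx1 : (1:ℝ) ≤ x + 1 := by linarith
  have hx0 : (0:ℝ) < x := by linarith
  set F : ℝ → ℝ := fun y => ε⁻¹ * Phi m y ^ (-ε) with hF
  set G : ℝ → ℝ := fun y => F y - F (y + 1) with hG
  -- G has derivative hf (x+1) - hf x at x
  have hdF : HasDerivAt F (-(hf m ε x)) x := F_hasDerivAt hε0 hx
  have hdF1 : HasDerivAt (fun y => F (y + 1)) (-(hf m ε (x+1))) x := by
    have h := F_hasDerivAt (m := m) hε0 hx1
    have hshift : HasDerivAt (fun y : ℝ => y + 1) 1 x := (hasDerivAt_id x).add_const 1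
    have := h.comp x hshift; rw [mul_one] at this; exact this
  have hdG : HasDerivAt G (-(hf m ε x) - -(hf m ε (x+1))) x := hdF.sub hdF1
  -- G x > 0
  have hGlow : hf m ε (x + 1) ≤ G x := diff_lower hε0 hx
  have hhpos1 : 0 < hf m ε (x + 1) := hf_pos hε0 hx1
  have hGpos : 0 < G x := lt_of_lt_of_le hhpos1 hGlow
  -- B = -log ∘ G
  have hdB : HasDerivAt (fun y => -Real.log (G y))
      (-((-(hf m ε x) - -(hf m ε (x+1))) / G x)) x :=
    (hdG.log (ne_of_gt hGpos)).neg
  -- bfun agrees with B on Ioi 1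
  have hagree : ∀ y ∈ Set.Ioi (1:ℝ), bfun m ε y = -Real.log (G y) := by
    intro y hy
    have hy1 : (1:ℝ) ≤ y := le_of_lt hy
    have hA := phi_pos m hy1
    have hA' := phi_pos m (by linarith : (1:ℝ) ≤ y + 1)
    have e : ∀ z : ℝ, 1 ≤ z → 1 / (ε * Phi m z ^ ε) = ε⁻¹ * Phi m z ^ (-ε) := by
      intro z hz
      rw [Real.rpow_neg (phi_pos m hz).le, one_div, mul_inv]
    show -Real.log (1 / (ε * Phi m y ^ ε) - 1 / (ε * Phi m (y+1) ^ ε)) = _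
    rw [e y hy1, e (y+1) (by linarith)]
  have hEv : bfun m ε =ᶠ[nhds x] fun y => -Real.log (G y) :=
    Filter.eventuallyEq_of_mem (Ioi_mem_nhds (by linarith : (1:ℝ) < x)) hagree
  have hdb : HasDerivAt (bfun m ε) ((hf m ε x - hf m ε (x+1)) / G x) x := by
    have := hdB.congr_of_eventuallyEq hEv
    refine this.congr_deriv ?_
    ring_nf
  refine ⟨hdb.differentiableAt, ?_⟩
  rw [hdb.deriv]
  have hnum_nonneg : 0 ≤ hf m ε x - hf m ε (x+1) := by
    linarith [hf_antitone (m := m) hε0 hx]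
  rw [abs_of_nonneg (div_nonneg hnum_nonneg hGpos.le)]
  have hnum : hf m ε x - hf m ε (x+1) ≤ (m + 2) * hf m ε x / x := hf_diff_le hε0 hε1 hm hx
  have hratio : hf m ε x ≤ 2 ^ (m + 2) * hf m ε (x+1) := hf_ratio hε0 hε1 hx
  calc (hf m ε x - hf m ε (x+1)) / G x
      ≤ (hf m ε x - hf m ε (x+1)) / hf m ε (x+1) :=
        div_le_div_of_nonneg_left hnum_nonneg hhpos1 hGlow |>.trans_eq rfl
    _ ≤ ((m + 2) * (2 ^ (m + 2) * hf m ε (x+1)) / x) / hf m ε (x+1) := by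
        apply div_le_div_of_nonneg_right _ hhpos1.le |>.trans_eq rfl
        calc hf m ε x - hf m ε (x+1) ≤ (m + 2) * hf m ε x / x := hnum
          _ ≤ (m + 2) * (2 ^ (m + 2) * hf m ε (x+1)) / x := by
              apply div_le_div_of_nonneg_right _ hx0.le |>.trans_eq rfl
              exact mul_le_mul_of_nonneg_left hratio (by positivity)
    _ = ((m:ℝ) + 2) * 2 ^ (m + 2) / x := by
        field_simp
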